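/- For the tensor product of two Bernstein operators $B_{n_1}, B_{n_2}$ on $C[0,1]$, for every $F \in C([0,1]^2)$ and $(x,y) \in [0,1]^2$: $|F(x,y) - ({}_xB_{n_1} \circ {}_yB_{n_2})(F;x,y)| \le \frac{3}{2}\left[\omega_2\left(F; \sqrt{\tfrac{x(1-x)}{n_1}}, 0\right) + \omega_2\left(F; 0, \sqrt{\tfrac{y(1-y)}{n_2}}\right)\right]$. -/

import Mathlib

open Finset Set

/-- Tensor product of two classical Bernstein operators on `[0,1]`. -/
noncomputable def bernsteinTensor (n₁ n₂ : ℕ) (F : ℝ → ℝ → ℝ) (x y : ℝ) : ℝ :=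
  ∑ i ∈ Finset.range (n₁ + 1), ∑ j ∈ Finset.range (n₂ + 1),
    F ((i : ℝ) / n₁) ((j : ℝ) / n₂) *
      ((n₁.choose i : ℝ) * x ^ i * (1 - x) ^ (n₁ - i)) *
      ((n₂.choose j : ℝ) * y ^ j * (1 - y) ^ (n₂ - j))

/-- Partial second modulus of smoothness in the first variable, on `[0,1]²`. -/
noncomputable def omega2Fst (F : ℝ → ℝ → ℝ) (δ : ℝ) : ℝ :=
  sSup {v | ∃ x y h : ℝ, x ∈ Set.Icc (0:ℝ) 1 ∧ x + 2 * h ∈ Set.Icc (0:ℝ) 1 ∧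
    y ∈ Set.Icc (0:ℝ) 1 ∧ |h| ≤ δ ∧
    v = |F (x + 2 * h) y - 2 * F (x + h) y + F x y|}

/-- Partial second modulus of smoothness in the second variable, on `[0,1]²`. -/
noncomputable def omega2Snd (F : ℝ → ℝ → ℝ) (δ : ℝ) : ℝ :=
  sSup {v | ∃ x y h : ℝ, x ∈ Set.Icc (0:ℝ) 1 ∧ y ∈ Set.Icc (0:ℝ) 1 ∧
    y + 2 * h ∈ Set.Icc (0:ℝ) 1 ∧ |h| ≤ δ ∧
    v = |F x (y + 2 * h) - 2 * F x (y + h) + F x y|}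

open Finset Set Polynomial

noncomputable def bp (n i : ℕ) (x : ℝ) : ℝ := (n.choose i : ℝ) * x ^ i * (1 - x) ^ (n - i)

lemma bp_eval (n i : ℕ) (x : ℝ) : (bernsteinPolynomial ℝ n i).eval x = bp n i x := by
  simp [bernsteinPolynomial, bp]

lemma bp_nonneg {n i : ℕ} {x : ℝ} (hx : x ∈ Set.Icc (0:ℝ) 1) : 0 ≤ bp n i x := by
  obtain ⟨h0, h1⟩ := hx
  have h2 : (0:ℝ) ≤ 1 - x := by linarith
  have := pow_nonneg h0 i
  have := pow_nonneg h2 (n - i)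
  have : (0:ℝ) ≤ (n.choose i : ℝ) := by positivity
  unfold bp
  positivity

lemma bp_sum (n : ℕ) (x : ℝ) : ∑ i ∈ Finset.range (n+1), bp n i x = 1 := by
  have := congrArg (Polynomial.eval x) (bernsteinPolynomial.sum ℝ n)
  rw [Polynomial.eval_finset_sum] at this
  simp only [bp_eval] at this
  simpa using this

lemma bp_sum_mul (n : ℕ) (x : ℝ) :
    ∑ i ∈ Finset.range (n+1), (i:ℝ) * bp n i x = n * x := by
  have := congrArg (Polynomial.eval x) (bernsteinPolynomial.sum_smul ℝ n)
  simp only [Polynomial.eval_finset_sum, nsmul_eq_mul, Polynomial.eval_mul,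
    Polynomial.eval_natCast, Polynomial.eval_X, bp_eval] at this
  simpa using this

lemma bp_var (n : ℕ) (x : ℝ) :
    ∑ i ∈ Finset.range (n+1), ((n:ℝ) * x - i)^2 * bp n i x = n * x * (1 - x) := by
  have := congrArg (Polynomial.eval x) (bernsteinPolynomial.variance ℝ n)
  simp only [Polynomial.eval_finset_sum, Polynomial.eval_mul, Polynomial.eval_pow,
    Polynomial.eval_sub, Polynomial.eval_natCast, Polynomial.eval_X, Polynomial.eval_one,
    nsmul_eq_mul, bp_eval] at this
  simpa using this
open Finset Set

noncomputable def chordg (f : ℝ → ℝ) (u v : ℝ) : ℝ → ℝ :=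
  fun t => ((v - t) * f u + (t - u) * f v) / (v - u) - f t

noncomputable def phiKL (ω h u v : ℝ) : ℝ → ℝ :=
  fun t => ω * (1 + (t - u) * (v - t) / (2 * h ^ 2))

lemma chordg_mid (f : ℝ → ℝ) {u v : ℝ} (huv : u < v) (a s : ℝ) :
    chordg f u v (a + s) - (chordg f u v a + chordg f u v (a + 2 * s)) / 2 =
      (f (a + 2 * s) - 2 * f (a + s) + f a) / 2 := by
  have h : v - u ≠ 0 := by linarith
  unfold chordg; field_simp; ring

lemma chordg_u (f : ℝ → ℝ) {u v : ℝ} (huv : u < v) : chordg f u v u = 0 := by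
  have h : v - u ≠ 0 := by linarith
  unfold chordg; field_simp; ring

lemma chordg_v (f : ℝ → ℝ) {u v : ℝ} (huv : u < v) : chordg f u v v = 0 := by
  have h : v - u ≠ 0 := by linarith
  unfold chordg; field_simp; ring

lemma phiKL_mid (ω u v : ℝ) {h : ℝ} (hh : h ≠ 0) (a s : ℝ) :
    phiKL ω h u v (a + s) =
      (phiKL ω h u v a + phiKL ω h u v (a + 2 * s)) / 2 + ω * s ^ 2 / (2 * h ^ 2) := by
  unfold phiKL
  have h2 : h ^ 2 ≠ 0 := pow_ne_zero _ hh
  field_simp; ring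

lemma phiKL_u (ω u v h : ℝ) : phiKL ω h u v u = ω := by unfold phiKL; simp

lemma phiKL_v (ω u v h : ℝ) : phiKL ω h u v v = ω := by unfold phiKL; simp

/-- Key chord lemma. -/
lemma key_lemma (f : ℝ → ℝ) (C ω h : ℝ) (hh : 0 < h)
    (hb : ∀ t ∈ Set.Icc (0:ℝ) 1, |f t| ≤ C)
    (hω : ∀ a s : ℝ, 0 ≤ s → s ≤ h → a ∈ Set.Icc (0:ℝ) 1 → a + 2*s ∈ Set.Icc (0:ℝ) 1 →
       |f (a + 2*s) - 2 * f (a + s) + f a| ≤ ω)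
    (u v : ℝ) (hu : 0 ≤ u) (hv : v ≤ 1) (huv : u < v) :
    ∀ x ∈ Set.Icc u v,
      chordg f u v x ≤ phiKL ω h u v x := by
  have hω0 : 0 ≤ ω := by
    have h0 : (0:ℝ) ∈ Set.Icc (0:ℝ) 1 := by norm_num
    have := hω 0 0 le_rfl hh.le h0 (by norm_num)
    have e : f (0 + 2*0) - 2 * f (0 + 0) + f 0 = 0 := by
      norm_num
      ring
    rw [e] at this; simpa using this
  have hsub : Set.Icc u v ⊆ Set.Icc (0:ℝ) 1 := Set.Icc_subset_Icc hu hv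
  have hC : 0 ≤ C := le_trans (abs_nonneg _) (hb 0 (by norm_num))
  have hh2 : (0:ℝ) < 2 * h ^ 2 := by positivity
  -- chord recursion
  have grec : ∀ a s : ℝ, 0 ≤ s → s ≤ h → a ∈ Set.Icc u v → a + 2*s ∈ Set.Icc u v →
      chordg f u v (a + s) ≤ (chordg f u v a + chordg f u v (a + 2*s)) / 2 + ω / 2 := by
    intro a s hs hsh ha ha2
    have hΔ := (abs_le.mp (hω a s hs hsh (hsub ha) (hsub ha2))).2
    have := chordg_mid f huv a s
    linarith
  -- bound on chordg
  have gb : ∀ t ∈ Set.Icc u v, chordg f u v t ≤ 2 * C := by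
    intro t ht
    obtain ⟨ht1, ht2⟩ := ht
    have hfu := abs_le.mp (hb u (hsub ⟨le_rfl, huv.le⟩))
    have hfv := abs_le.mp (hb v (hsub ⟨huv.le, le_rfl⟩))
    have hft := abs_le.mp (hb t (hsub ⟨ht1, ht2⟩))
    have h1 : ((v - t) * f u + (t - u) * f v) / (v - u) ≤ C := by
      rw [div_le_iff₀ (by linarith)]
      nlinarith
    unfold chordg
    linarith
  -- nonnegativity of phi
  have phib : ∀ t ∈ Set.Icc u v, 0 ≤ phiKL ω h u v t := by
    intro t ht
    obtain ⟨ht1, ht2⟩ := ht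
    unfold phiKL
    have : 0 ≤ (t - u) * (v - t) := mul_nonneg (by linarith) (by linarith)
    positivity
  intro x hx
  -- epsilon argument
  have main : ∀ ε : ℝ, 0 < ε → chordg f u v x ≤ phiKL ω h u v x + ε := by
    intro ε hε
    set G : ℝ → ℝ := fun t => chordg f u v t - phiKL ω h u v t + ε * t ^ 2 with hG
    set S : ℝ := sSup (G '' Set.Icc u v) with hS
    have hbdd : BddAbove (G '' Set.Icc u v) := by
      refine ⟨2 * C + ε, ?_⟩
      rintro _ ⟨t, ht, rfl⟩
      have h1 := gb t ht
      have h2 := phib t ht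
      have h3 : t ^ 2 ≤ 1 := by
        have := hsub ht
        obtain ⟨a1, a2⟩ := this
        nlinarith
      simp only [hG]
      nlinarith
    have hne : (G '' Set.Icc u v).Nonempty := ⟨G u, ⟨u, ⟨le_rfl, huv.le⟩, rfl⟩⟩
    have hle : ∀ t ∈ Set.Icc u v, G t ≤ S := fun t ht => le_csSup hbdd ⟨t, ht, rfl⟩
    -- G recursion
    have Grec : ∀ a s : ℝ, 0 ≤ s → s ≤ h → a ∈ Set.Icc u v → a + 2*s ∈ Set.Icc u v →
        G (a + s) ≤ (G a + G (a + 2*s)) / 2 + ω / 2 - ω * s ^ 2 / (2 * h ^ 2) - ε * s ^ 2 := by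
      intro a s hs hsh ha ha2
      have h1 := grec a s hs hsh ha ha2
      have h2 := phiKL_mid ω u v (ne_of_gt hh) a s
      have h3 : ε * (a + s) ^ 2 = (ε * a ^ 2 + ε * (a + 2*s) ^ 2) / 2 - ε * s ^ 2 := by ring
      simp only [hG]
      linarith
    have hGu : G u = -ω + ε * u ^ 2 := by simp only [hG]; rw [chordg_u f huv, phiKL_u]; ring
    have hGv : G v = -ω + ε * v ^ 2 := by simp only [hG]; rw [chordg_v f huv, phiKL_v]; ring
    have hu21 : u ^ 2 ≤ 1 := by nlinarith [hu, hv, huv.le]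
    have hv21 : v ^ 2 ≤ 1 := by nlinarith [hu, hv, huv.le]
    clear_value G S
    -- the claim
    have claim : ∀ t ∈ Set.Icc u v, G t ≤ S / 2 + ε / 2 ∨ G t ≤ S - ε * h ^ 2 := by
      intro t ht
      obtain ⟨ht1, ht2⟩ := ht
      by_cases hcA : t - u ≤ h ∧ t ≤ (u + v) / 2
      · left
        obtain ⟨hA1, hA2⟩ := hcA
        have h2tu : u + 2 * (t - u) = 2 * t - u := by ring
        have hmem2 : 2 * t - u ∈ Set.Icc u v := ⟨by linarith, by linarith⟩
        have := Grec u (t - u) (by linarith) hA1 ⟨le_rfl, huv.le⟩ (by rw [h2tu]; exact hmem2)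
        rw [show u + (t - u) = t by ring, h2tu] at this
        have hS2 := hle _ hmem2
        have e1 : 0 ≤ ω * (t - u) ^ 2 / (2 * h ^ 2) := by positivity
        have e2 : 0 ≤ ε * (t - u) ^ 2 := by positivity
        rw [hGu] at this
        have e4 : ε * u ^ 2 ≤ ε * 1 := by nlinarith
        linarith
      · by_cases hcB : v - t ≤ h ∧ (u + v) / 2 ≤ t
        · left
          obtain ⟨hB1, hB2⟩ := hcB
          have h2tv : 2 * t - v + 2 * (v - t) = v := by ring
          have hmem2 : 2 * t - v ∈ Set.Icc u v := ⟨by linarith, by linarith⟩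
          have := Grec (2 * t - v) (v - t) (by linarith) hB1 hmem2 (by rw [h2tv]; exact ⟨huv.le, le_rfl⟩)
          rw [show 2 * t - v + (v - t) = t by ring, h2tv] at this
          have hS2 := hle _ hmem2
          have e1 : 0 ≤ ω * (v - t) ^ 2 / (2 * h ^ 2) := by positivity
          have e2 : 0 ≤ ε * (v - t) ^ 2 := by positivity
          rw [hGv] at this
          have e4 : ε * v ^ 2 ≤ ε * 1 := by nlinarith
          linarith
        · right
          -- interior case
          have hint : h < t - u ∧ h < v - t := by
            rcases le_or_gt t ((u + v) / 2) with hmid | hmid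
            · have h1 : h < t - u := by
                by_contra hcon
                exact hcA ⟨by linarith, hmid⟩
              exact ⟨h1, by linarith⟩
            · have h1 : h < v - t := by
                by_contra hcon
                exact hcB ⟨by linarith, by linarith⟩
              exact ⟨by linarith, h1⟩
          obtain ⟨hi1, hi2⟩ := hint
          have := Grec (t - h) h hh.le le_rfl ⟨by linarith, by linarith⟩
            (by rw [show t - h + 2 * h = t + h by ring]; exact ⟨by linarith, by linarith⟩)
          rw [show t - h + h = t by ring, show t - h + 2 * h = t + h by ring] at this
          have hS1 := hle (t - h) ⟨by linarith, by linarith⟩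
          have hS2 := hle (t + h) ⟨by linarith, by linarith⟩
          have e3 : ω * h ^ 2 / (2 * h ^ 2) = ω / 2 := by
            rw [mul_div_assoc]
            congr 1
            rw [div_eq_iff (ne_of_gt hh2)]; ring
          rw [e3] at this
          linarith [hS1, hS2]
    -- S ≤ ε
    have hSmax : S ≤ max (S / 2 + ε / 2) (S - ε * h ^ 2) := by
      have h2 : sSup (G '' Set.Icc u v) ≤ max (S / 2 + ε / 2) (S - ε * h ^ 2) := by
        apply csSup_le hne
        rintro _ ⟨t, ht, rfl⟩
        rcases claim t ht with h1 | h1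
        · exact le_trans h1 (le_max_left _ _)
        · exact le_trans h1 (le_max_right _ _)
      rwa [← hS] at h2
    have hSε : S ≤ ε := by
      rcases le_max_iff.mp hSmax with h1 | h1
      · linarith
      · nlinarith
    have hGx := hle x hx
    have : chordg f u v x - phiKL ω h u v x ≤ G x := by
      simp only [hG]; nlinarith [sq_nonneg x]
    linarith
  exact le_of_forall_pos_le_add main

/-- One-sided Bernstein estimate. -/
lemma U1 (f : ℝ → ℝ) (C ω h : ℝ) (hh : 0 < h)
    (hb : ∀ t ∈ Set.Icc (0:ℝ) 1, |f t| ≤ C)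
    (hω : ∀ a s : ℝ, 0 ≤ s → s ≤ h → a ∈ Set.Icc (0:ℝ) 1 → a + 2*s ∈ Set.Icc (0:ℝ) 1 →
       |f (a + 2*s) - 2 * f (a + s) + f a| ≤ ω)
    (x : ℝ) (hx : x ∈ Set.Ioo (0:ℝ) 1) (n : ℕ) (hn : 0 < n) :
    (∑ i ∈ Finset.range (n+1), f ((i:ℝ)/n) * bp n i x) - f x ≤
      ω * (1 + x * (1-x) / n / (2 * h ^ 2)) := by
  obtain ⟨hx0, hx1⟩ := hx
  have hω0 : 0 ≤ ω := by
    have h0 : (0:ℝ) ∈ Set.Icc (0:ℝ) 1 := by norm_num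
    have := hω 0 0 le_rfl hh.le h0 (by norm_num)
    have e : f (0 + 2*0) - 2 * f (0 + 0) + f 0 = 0 := by norm_num; ring
    rw [e] at this; simpa using this
  have hh2 : (0:ℝ) < 2 * h ^ 2 := by positivity
  -- cross inequality from key lemma
  have keyAB : ∀ u : ℝ, 0 ≤ u → u < x → ∀ v : ℝ, x < v → v ≤ 1 →
      (f v - f x - ω * (1 + (v - x)^2 / (2*h^2))) / (v - x) ≤
      (f x - f u + ω * (1 + (u - x)^2 / (2*h^2))) / (x - u) := by
    intro u hu hux v hxv hv
    have huv : u < v := lt_trans hux hxv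
    have hKL := key_lemma f C ω h hh hb hω u v hu hv huv x ⟨hux.le, hxv.le⟩
    unfold chordg phiKL at hKL
    rw [div_le_div_iff₀ (by linarith) (by linarith)]
    have hP : (v - x) * f u + (x - u) * f v ≤
        (ω * (1 + (x - u) * (v - x) / (2 * h ^ 2)) + f x) * (v - u) := by
      have h' : ((v - x) * f u + (x - u) * f v) / (v - u) ≤
          ω * (1 + (x - u) * (v - x) / (2 * h ^ 2)) + f x := by linarith
      rw [div_le_iff₀ (by linarith : (0:ℝ) < v - u)] at h'
      linarith
    have hid : (f x - f u + ω * (1 + (u - x)^2 / (2*h^2))) * (v - x)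
        - (f v - f x - ω * (1 + (v - x)^2 / (2*h^2))) * (x - u)
        = (ω * (1 + (x - u) * (v - x) / (2 * h ^ 2)) + f x) * (v - u)
          - ((v - x) * f u + (x - u) * f v) := by
      field_simp
      ring
    linarith
  -- the slope
  set A : ℝ → ℝ := fun v => (f v - f x - ω * (1 + (v - x)^2 / (2*h^2))) / (v - x) with hA
  set B : ℝ → ℝ := fun u => (f x - f u + ω * (1 + (u - x)^2 / (2*h^2))) / (x - u) with hB
  have hx2 : x/2 < x := by linarith
  have hx2' : 0 ≤ x/2 := by linarith
  have hbddA : BddAbove (A '' Set.Ioc x 1) := by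
    refine ⟨B (x/2), ?_⟩
    rintro _ ⟨v, hv, rfl⟩
    exact keyAB (x/2) hx2' hx2 v hv.1 hv.2
  have hneA : (A '' Set.Ioc x 1).Nonempty := ⟨A 1, ⟨1, ⟨hx1, le_rfl⟩, rfl⟩⟩
  set d : ℝ := sSup (A '' Set.Ioc x 1) with hd
  have hdge : ∀ v ∈ Set.Ioc x 1, A v ≤ d := fun v hv => le_csSup hbddA ⟨v, hv, rfl⟩
  have hdle : ∀ u : ℝ, 0 ≤ u → u < x → d ≤ B u := by
    intro u hu hux
    apply csSup_le hneA
    rintro _ ⟨v, hv, rfl⟩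
    exact keyAB u hu hux v hv.1 hv.2
  -- pointwise estimate
  have pointwise : ∀ t ∈ Set.Icc (0:ℝ) 1,
      f t - f x - (t - x) * d ≤ ω * (1 + (t - x)^2 / (2*h^2)) := by
    intro t ht
    rcases lt_trichotomy t x with hlt | heq | hgt
    · have hdB := hdle t ht.1 hlt
      have hxt : (0:ℝ) < x - t := by linarith
      have h1 : (x - t) * d ≤ (x - t) * B t := by
        exact mul_le_mul_of_nonneg_left hdB (by linarith)
      have h2 : (x - t) * B t = f x - f t + ω * (1 + (t - x)^2 / (2*h^2)) := by
        rw [hB]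
        field_simp
      nlinarith
    · subst heq
      have : (0:ℝ) ≤ (t - t)^2 / (2*h^2) := by positivity
      nlinarith
    · have hAt := hdge t ⟨hgt, ht.2⟩
      have hxt : (0:ℝ) < t - x := by linarith
      have h1 : (t - x) * A t ≤ (t - x) * d := mul_le_mul_of_nonneg_left hAt (by linarith)
      have h2 : (t - x) * A t = f t - f x - ω * (1 + (t - x)^2 / (2*h^2)) := by
        rw [hA]
        field_simp
      nlinarith
  -- summation
  have hxI : x ∈ Set.Icc (0:ℝ) 1 := ⟨hx0.le, hx1.le⟩
  have hn0 : (n:ℝ) ≠ 0 := Nat.cast_ne_zero.mpr (Nat.pos_iff_ne_zero.mp hn)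
  have hnpos : (0:ℝ) < n := Nat.cast_pos.mpr hn
  have e1 : ∑ i ∈ Finset.range (n+1), ((i:ℝ)/n) * bp n i x = x := by
    have : ∑ i ∈ Finset.range (n+1), ((i:ℝ)/n) * bp n i x
        = (∑ i ∈ Finset.range (n+1), (i:ℝ) * bp n i x) / n := by
      rw [Finset.sum_div]
      exact Finset.sum_congr rfl fun i _ => by ring
    rw [this, bp_sum_mul]
    field_simp
  have e2 : ∑ i ∈ Finset.range (n+1), ((i:ℝ)/n - x)^2 * bp n i x = x * (1-x) / n := by
    have : ∑ i ∈ Finset.range (n+1), ((i:ℝ)/n - x)^2 * bp n i x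
        = (∑ i ∈ Finset.range (n+1), ((n:ℝ) * x - i)^2 * bp n i x) / n^2 := by
      rw [Finset.sum_div]
      refine Finset.sum_congr rfl fun i _ => ?_
      have : ((i:ℝ)/n - x)^2 = ((n:ℝ) * x - i)^2 / n^2 := by
        field_simp
        ring
      rw [this]; ring
    rw [this, bp_var]
    field_simp
  have step : ∀ i ∈ Finset.range (n+1),
      (f ((i:ℝ)/n) - f x - ((i:ℝ)/n - x) * d) * bp n i x ≤
      (ω * (1 + ((i:ℝ)/n - x)^2 / (2*h^2))) * bp n i x := by
    intro i hi
    have hi' : (i:ℝ) ≤ n := by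
      exact_mod_cast Nat.lt_succ_iff.mp (Finset.mem_range.mp hi)
    have htI : (i:ℝ)/n ∈ Set.Icc (0:ℝ) 1 := by
      constructor
      · positivity
      · rw [div_le_one hnpos]; exact hi'
    exact mul_le_mul_of_nonneg_right (pointwise _ htI) (bp_nonneg hxI)
  have hsum := Finset.sum_le_sum step
  have lhs_eq : ∑ i ∈ Finset.range (n+1),
      (f ((i:ℝ)/n) - f x - ((i:ℝ)/n - x) * d) * bp n i x
      = (∑ i ∈ Finset.range (n+1), f ((i:ℝ)/n) * bp n i x) - f x := by
    have expand : ∀ i ∈ Finset.range (n+1),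
        (f ((i:ℝ)/n) - f x - ((i:ℝ)/n - x) * d) * bp n i x
        = f ((i:ℝ)/n) * bp n i x - f x * bp n i x
          - d * (((i:ℝ)/n) * bp n i x) + d * (x * bp n i x) := by
      intro i _; ring
    rw [Finset.sum_congr rfl expand]
    rw [Finset.sum_add_distrib, Finset.sum_sub_distrib, Finset.sum_sub_distrib]
    rw [← Finset.mul_sum, ← Finset.mul_sum, ← Finset.mul_sum, ← Finset.mul_sum]
    rw [bp_sum, e1]
    ring
  have rhs_eq : ∑ i ∈ Finset.range (n+1),
      (ω * (1 + ((i:ℝ)/n - x)^2 / (2*h^2))) * bp n i x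
      = ω * (1 + x * (1-x) / n / (2 * h ^ 2)) := by
    have expand : ∀ i ∈ Finset.range (n+1),
        (ω * (1 + ((i:ℝ)/n - x)^2 / (2*h^2))) * bp n i x
        = ω * bp n i x + (ω / (2*h^2)) * (((i:ℝ)/n - x)^2 * bp n i x) := by
      intro i _
      field_simp
    rw [Finset.sum_congr rfl expand]
    rw [Finset.sum_add_distrib, ← Finset.mul_sum, ← Finset.mul_sum]
    rw [bp_sum, e2]
    field_simp
  rw [lhs_eq, rhs_eq] at hsum
  exact hsum

/-- Two-sided Bernstein estimate. -/
lemma U2 (f : ℝ → ℝ) (C ω h : ℝ) (hh : 0 < h)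
    (hb : ∀ t ∈ Set.Icc (0:ℝ) 1, |f t| ≤ C)
    (hω : ∀ a s : ℝ, 0 ≤ s → s ≤ h → a ∈ Set.Icc (0:ℝ) 1 → a + 2*s ∈ Set.Icc (0:ℝ) 1 →
       |f (a + 2*s) - 2 * f (a + s) + f a| ≤ ω)
    (x : ℝ) (hx : x ∈ Set.Ioo (0:ℝ) 1) (n : ℕ) (hn : 0 < n) :
    |(∑ i ∈ Finset.range (n+1), f ((i:ℝ)/n) * bp n i x) - f x| ≤
      ω * (1 + x * (1-x) / n / (2 * h ^ 2)) := by
  have h1 := U1 f C ω h hh hb hω x hx n hn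
  have hb' : ∀ t ∈ Set.Icc (0:ℝ) 1, |(fun t => -f t) t| ≤ C := by
    intro t ht; simpa [abs_neg] using hb t ht
  have hω' : ∀ a s : ℝ, 0 ≤ s → s ≤ h → a ∈ Set.Icc (0:ℝ) 1 → a + 2*s ∈ Set.Icc (0:ℝ) 1 →
      |(fun t => -f t) (a + 2*s) - 2 * (fun t => -f t) (a + s) + (fun t => -f t) a| ≤ ω := by
    intro a s hs hsh ha ha2
    have h3 := hω a s hs hsh ha ha2
    have e : (fun t => -f t) (a + 2*s) - 2 * (fun t => -f t) (a + s) + (fun t => -f t) a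
        = -(f (a + 2*s) - 2 * f (a + s) + f a) := by simp only []; ring
    rw [e, abs_neg]
    exact h3
  have h2 := U1 (fun t => -f t) C ω h hh hb' hω' x hx n hn
  simp only [neg_mul, Finset.sum_neg_distrib] at h2
  rw [abs_le]
  constructor
  · linarith
  · linarith

lemma sum_bp_zero (f : ℝ → ℝ) (n : ℕ) :
    ∑ i ∈ Finset.range (n+1), f ((i:ℝ)/n) * bp n i 0 = f 0 := by
  rw [Finset.sum_eq_single 0]
  · simp [bp]
  · intro i _ hi
    have : (0:ℝ) ^ i = 0 := zero_pow hi
    simp [bp, this]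
  · intro hmem
    exact absurd (Finset.mem_range.mpr (Nat.succ_pos n)) hmem

lemma sum_bp_one (f : ℝ → ℝ) (n : ℕ) (hn : 0 < n) :
    ∑ i ∈ Finset.range (n+1), f ((i:ℝ)/n) * bp n i 1 = f 1 := by
  rw [Finset.sum_eq_single n]
  · have : ((n:ℝ))/n = 1 := div_self (Nat.cast_ne_zero.mpr (Nat.pos_iff_ne_zero.mp hn))
    simp [bp, this]
  · intro i hi hne
    have hlt : i < n := lt_of_le_of_ne (Nat.lt_succ_iff.mp (Finset.mem_range.mp hi)) hne
    have h2 : n - i ≠ 0 := Nat.sub_ne_zero_of_lt hlt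
    simp [bp, zero_pow h2]
  · intro hmem
    exact absurd (Finset.mem_range.mpr (Nat.lt_succ_self n)) hmem

/-- Full univariate estimate with pointwise step. -/
lemma UALL (f : ℝ → ℝ) (C ω : ℝ)
    (hb : ∀ t ∈ Set.Icc (0:ℝ) 1, |f t| ≤ C)
    (x : ℝ) (hx : x ∈ Set.Icc (0:ℝ) 1) (n : ℕ) (hn : 0 < n)
    (hω : ∀ a s : ℝ, 0 ≤ s → s ≤ Real.sqrt (x * (1-x) / n) →
       a ∈ Set.Icc (0:ℝ) 1 → a + 2*s ∈ Set.Icc (0:ℝ) 1 →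
       |f (a + 2*s) - 2 * f (a + s) + f a| ≤ ω) :
    |(∑ i ∈ Finset.range (n+1), f ((i:ℝ)/n) * bp n i x) - f x| ≤ 3/2 * ω := by
  have hω0 : 0 ≤ ω := by
    have h0 : (0:ℝ) ∈ Set.Icc (0:ℝ) 1 := by norm_num
    have := hω 0 0 le_rfl (Real.sqrt_nonneg _) h0 (by norm_num)
    have e : f (0 + 2*0) - 2 * f (0 + 0) + f 0 = 0 := by norm_num; ring
    rw [e] at this; simpa using this
  rcases eq_or_lt_of_le hx.1 with h0 | h0
  · rw [← h0, sum_bp_zero]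
    simp
    linarith
  rcases eq_or_lt_of_le hx.2 with h1 | h1
  · rw [h1, sum_bp_one f n hn]
    simp
    linarith
  · -- interior
    have hnpos : (0:ℝ) < n := Nat.cast_pos.mpr hn
    have hvpos : 0 < x * (1-x) / n := by
      apply div_pos (mul_pos h0 (by linarith)) hnpos
    set δ : ℝ := Real.sqrt (x * (1-x) / n) with hδ
    have hδpos : 0 < δ := Real.sqrt_pos.mpr hvpos
    have hδ2 : δ ^ 2 = x * (1-x) / n := Real.sq_sqrt hvpos.le
    have := U2 f C ω δ hδpos hb hω x ⟨h0, h1⟩ n hn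
    have e : x * (1-x) / n / (2 * δ ^ 2) = 1/2 := by
      rw [hδ2]
      have haux : x * (1-x) ≠ 0 := ne_of_gt (mul_pos h0 (by linarith))
      have hn0 : (n:ℝ) ≠ 0 := ne_of_gt hnpos
      field_simp
    rw [e] at this
    linarith [this]

/-- second-modulus estimate for the tensor product of Bernstein operators. -/
theorem stmt2 (n₁ n₂ : ℕ) (hn₁ : 0 < n₁) (hn₂ : 0 < n₂) (F : ℝ → ℝ → ℝ)
    (hF : ContinuousOn (fun p : ℝ × ℝ => F p.1 p.2)
      (Set.Icc (0:ℝ) 1 ×ˢ Set.Icc (0:ℝ) 1))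
    (x y : ℝ) (hx : x ∈ Set.Icc (0:ℝ) 1) (hy : y ∈ Set.Icc (0:ℝ) 1) :
    |F x y - bernsteinTensor n₁ n₂ F x y| ≤
      (3 / 2) * (omega2Fst F (Real.sqrt (x * (1 - x) / n₁)) +
        omega2Snd F (Real.sqrt (y * (1 - y) / n₂))) := by
  -- a uniform bound for F on the square
  obtain ⟨C, hC⟩ := (isCompact_Icc.prod isCompact_Icc).exists_bound_of_continuousOn hF
  have hb : ∀ a ∈ Set.Icc (0:ℝ) 1, ∀ b ∈ Set.Icc (0:ℝ) 1, |F a b| ≤ C := by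
    intro a ha b hb
    simpa using hC (a, b) (Set.mk_mem_prod ha hb)
  set δ₁ : ℝ := Real.sqrt (x * (1 - x) / n₁) with hδ₁
  set δ₂ : ℝ := Real.sqrt (y * (1 - y) / n₂) with hδ₂
  set ω₁ : ℝ := omega2Fst F δ₁ with hω₁
  set ω₂ : ℝ := omega2Snd F δ₂ with hω₂
  -- bounded above
  have hbdd₁ : BddAbove {v | ∃ a b s : ℝ, a ∈ Set.Icc (0:ℝ) 1 ∧ a + 2 * s ∈ Set.Icc (0:ℝ) 1 ∧
      b ∈ Set.Icc (0:ℝ) 1 ∧ |s| ≤ δ₁ ∧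
      v = |F (a + 2 * s) b - 2 * F (a + s) b + F a b|} := by
    refine ⟨4 * C, ?_⟩
    rintro w ⟨a, b, s, h1, h2, h3, _, rfl⟩
    have hmid : a + s ∈ Set.Icc (0:ℝ) 1 := by
      obtain ⟨p1, p2⟩ := h1; obtain ⟨q1, q2⟩ := h2
      constructor <;> linarith
    have b1 := abs_le.mp (hb (a + 2*s) h2 b h3)
    have b2 := abs_le.mp (hb (a + s) hmid b h3)
    have b3 := abs_le.mp (hb a h1 b h3)
    rw [abs_le]
    constructor <;> nlinarith [b1.1, b1.2, b2.1, b2.2, b3.1, b3.2]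
  have hbdd₂ : BddAbove {v | ∃ a b s : ℝ, a ∈ Set.Icc (0:ℝ) 1 ∧ b ∈ Set.Icc (0:ℝ) 1 ∧
      b + 2 * s ∈ Set.Icc (0:ℝ) 1 ∧ |s| ≤ δ₂ ∧
      v = |F a (b + 2 * s) - 2 * F a (b + s) + F a b|} := by
    refine ⟨4 * C, ?_⟩
    rintro w ⟨a, b, s, h1, h2, h3, _, rfl⟩
    have hmid : b + s ∈ Set.Icc (0:ℝ) 1 := by
      obtain ⟨p1, p2⟩ := h2; obtain ⟨q1, q2⟩ := h3
      constructor <;> linarith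
    have b1 := abs_le.mp (hb a h1 (b + 2*s) h3)
    have b2 := abs_le.mp (hb a h1 (b + s) hmid)
    have b3 := abs_le.mp (hb a h1 b h2)
    rw [abs_le]
    constructor <;> nlinarith [b1.1, b1.2, b2.1, b2.2, b3.1, b3.2]
  -- the first modulus bounds second differences in the first variable
  have hω1le : ∀ a s : ℝ, 0 ≤ s → s ≤ δ₁ → a ∈ Set.Icc (0:ℝ) 1 → a + 2*s ∈ Set.Icc (0:ℝ) 1 →
      |F (a + 2*s) y - 2 * F (a + s) y + F a y| ≤ ω₁ := by
    intro a s hs hsδ ha ha2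
    refine le_csSup hbdd₁ ⟨a, y, s, ha, ha2, hy, by rwa [abs_of_nonneg hs], rfl⟩
  have hω2le : ∀ a : ℝ, a ∈ Set.Icc (0:ℝ) 1 →
      ∀ b s : ℝ, 0 ≤ s → s ≤ δ₂ → b ∈ Set.Icc (0:ℝ) 1 → b + 2*s ∈ Set.Icc (0:ℝ) 1 →
      |F a (b + 2*s) - 2 * F a (b + s) + F a b| ≤ ω₂ := by
    intro a ha b s hs hsδ hbm hb2
    refine le_csSup hbdd₂ ⟨a, b, s, ha, hbm, hb2, by rwa [abs_of_nonneg hs], rfl⟩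
  -- first factor estimate
  have hb1 : ∀ t ∈ Set.Icc (0:ℝ) 1, |(fun t => F t y) t| ≤ C := fun t ht => hb t ht y hy
  have h_first := UALL (fun t => F t y) C ω₁ hb1 x hx n₁ hn₁
    (by intro a s hs hsδ ha ha2; exact hω1le a s hs hsδ ha ha2)
  -- second factor estimates, for each node
  have h_inner : ∀ i : ℕ, i ∈ Finset.range (n₁ + 1) →
      |(∑ j ∈ Finset.range (n₂+1), F ((i:ℝ)/n₁) ((j:ℝ)/n₂) * bp n₂ j y) - F ((i:ℝ)/n₁) y|
        ≤ 3/2 * ω₂ := by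
    intro i hi
    have hi' : (i:ℝ) ≤ n₁ := by
      exact_mod_cast Nat.lt_succ_iff.mp (Finset.mem_range.mp hi)
    have hn1pos : (0:ℝ) < n₁ := Nat.cast_pos.mpr hn₁
    have htI : (i:ℝ)/n₁ ∈ Set.Icc (0:ℝ) 1 := by
      constructor
      · positivity
      · rw [div_le_one hn1pos]; exact hi'
    have hb2 : ∀ t ∈ Set.Icc (0:ℝ) 1, |(fun t => F ((i:ℝ)/n₁) t) t| ≤ C :=
      fun t ht => hb _ htI t ht
    have := UALL (fun t => F ((i:ℝ)/n₁) t) C ω₂ hb2 y hy n₂ hn₂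
      (by intro b s hs hsδ hbm hb2m; exact hω2le _ htI b s hs hsδ hbm hb2m)
    simpa using this
  -- rearrange the tensor sum
  have hT : bernsteinTensor n₁ n₂ F x y =
      ∑ i ∈ Finset.range (n₁+1), ∑ j ∈ Finset.range (n₂+1),
        F ((i:ℝ)/n₁) ((j:ℝ)/n₂) * bp n₁ i x * bp n₂ j y := rfl
  set A1 : ℝ := ∑ i ∈ Finset.range (n₁+1), F ((i:ℝ)/n₁) y * bp n₁ i x with hA1
  have hTA : bernsteinTensor n₁ n₂ F x y - A1 =
      ∑ i ∈ Finset.range (n₁+1),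
        ((∑ j ∈ Finset.range (n₂+1), F ((i:ℝ)/n₁) ((j:ℝ)/n₂) * bp n₂ j y) - F ((i:ℝ)/n₁) y)
          * bp n₁ i x := by
    rw [hT, hA1, ← Finset.sum_sub_distrib]
    refine Finset.sum_congr rfl fun i _ => ?_
    rw [sub_mul, Finset.sum_mul]
    congr 1
    exact Finset.sum_congr rfl fun j _ => by ring
  have h_second : |bernsteinTensor n₁ n₂ F x y - A1| ≤ 3/2 * ω₂ := by
    rw [hTA]
    calc |∑ i ∈ Finset.range (n₁+1),
        ((∑ j ∈ Finset.range (n₂+1), F ((i:ℝ)/n₁) ((j:ℝ)/n₂) * bp n₂ j y) - F ((i:ℝ)/n₁) y)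
          * bp n₁ i x|
        ≤ ∑ i ∈ Finset.range (n₁+1),
          |((∑ j ∈ Finset.range (n₂+1), F ((i:ℝ)/n₁) ((j:ℝ)/n₂) * bp n₂ j y) - F ((i:ℝ)/n₁) y)
            * bp n₁ i x| := Finset.abs_sum_le_sum_abs _ _
      _ ≤ ∑ i ∈ Finset.range (n₁+1), (3/2 * ω₂) * bp n₁ i x := by
          refine Finset.sum_le_sum fun i hi => ?_
          rw [abs_mul, abs_of_nonneg (bp_nonneg hx)]
          exact mul_le_mul_of_nonneg_right (h_inner i hi) (bp_nonneg hx)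
      _ = 3/2 * ω₂ := by rw [← Finset.mul_sum, bp_sum, mul_one]
  -- combine
  have hfinal : |F x y - bernsteinTensor n₁ n₂ F x y| ≤ 3/2 * ω₁ + 3/2 * ω₂ := by
    have e : F x y - bernsteinTensor n₁ n₂ F x y =
        -((A1 - F x y)) - (bernsteinTensor n₁ n₂ F x y - A1) := by ring
    rw [e]
    calc |-(A1 - F x y) - (bernsteinTensor n₁ n₂ F x y - A1)|
        ≤ |-(A1 - F x y)| + |bernsteinTensor n₁ n₂ F x y - A1| := abs_sub _ _
      _ = |A1 - F x y| + |bernsteinTensor n₁ n₂ F x y - A1| := by rw [abs_neg]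
      _ ≤ 3/2 * ω₁ + 3/2 * ω₂ := add_le_add h_first h_second
  have : 3/2 * ω₁ + 3/2 * ω₂ = 3/2 * (ω₁ + ω₂) := by ring
  rw [this] at hfinal
  exact hfinal
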